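/- Suppose R is irreducible and let γ be its highest root, i.e. the unique root such that γ − α ∈ ℕΔ for every root α. Then γ∨ is the unique coroot that is both short and dominant (dominant meaning ⟨α, γ∨⟩ ≥ 0 for all α ∈ R₊). -/

import Mathlib

open scoped BigOperators Classical

noncomputable section

section AuxForms

variable {M : Type} [AddCommGroup M] [Module ℝ M] [FiniteDimensional ℝ M]

lemma exists_posdef_form (M : Type) [AddCommGroup M] [Module ℝ M] [FiniteDimensional ℝ M] :
    ∃ C : M → M → ℝ, (∀ x y, C x y = C y x) ∧ (∀ x y z, C (x + y) z = C x z + C y z) ∧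
      (∀ (a : ℝ) (x y : M), C (a • x) y = a * C x y) ∧ (∀ x, 0 ≤ C x x) ∧
      (∀ x, x ≠ 0 → 0 < C x x) := by
  classical
  set b := Module.finBasis ℝ M with hb
  refine ⟨fun x y => ∑ i, b.repr x i * b.repr y i, fun x y => ?_, fun x y z => ?_, fun a x y => ?_,
    fun x => ?_, fun x hx => ?_⟩
  · exact Finset.sum_congr rfl fun i _ => mul_comm _ _
  · rw [← Finset.sum_add_distrib]
    exact Finset.sum_congr rfl fun i _ => by rw [map_add]; simp [add_mul]
  · rw [Finset.mul_sum]
    exact Finset.sum_congr rfl fun i _ => by rw [map_smul]; simp [mul_assoc]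
  · exact Finset.sum_nonneg fun i _ => mul_self_nonneg _
  · have h : b.repr x ≠ 0 := fun h => hx (by simpa using congrArg b.repr.symm h)
    obtain ⟨i, hi⟩ : ∃ i, b.repr x i ≠ 0 := by
      by_contra h'
      push_neg at h'
      exact h (Finsupp.ext fun i => h' i)
    exact Finset.sum_pos' (fun i _ => mul_self_nonneg _)
      ⟨i, Finset.mem_univ i, mul_self_pos.2 hi⟩

lemma linearEquiv_mul_apply (e f : M ≃ₗ[ℝ] M) (x : M) : (e * f) x = e (f x) := rfl

lemma exists_avg_form (T : Finset M) (G : Subgroup (M ≃ₗ[ℝ] M))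
    (hG : ∀ g ∈ G, ∀ t ∈ T, g t ∈ T) :
    ∃ C : M → M → ℝ, (∀ x y, C x y = C y x) ∧ (∀ x y z, C (x + y) z = C x z + C y z) ∧
      (∀ (a : ℝ) (x y : M), C (a • x) y = a * C x y) ∧
      (∀ x ∈ Submodule.span ℝ (T : Set M), x ≠ 0 → 0 < C x x) ∧
      (∀ g ∈ G, ∀ x ∈ Submodule.span ℝ (T : Set M), ∀ y ∈ Submodule.span ℝ (T : Set M),
        C (g x) (g y) = C x y) := by
  classical
  obtain ⟨B₀, hB₀symm, hB₀add, hB₀smul, hB₀nonneg, hB₀pos⟩ := exists_posdef_form M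
  set P : Submodule ℝ M := Submodule.span ℝ (T : Set M) with hPdef
  obtain ⟨Q, hQ⟩ := P.exists_isCompl
  set π : M →ₗ[ℝ] M := P.subtype.comp (P.linearProjOfIsCompl Q hQ) with hπdef
  have hπleft : ∀ x ∈ P, π x = x := by
    intro x hx
    have : (P.linearProjOfIsCompl Q hQ) x = ⟨x, hx⟩ :=
      Submodule.linearProjOfIsCompl_apply_left hQ ⟨x, hx⟩
    simp [hπdef, this]
  -- the finite set of "traces" of elements of G on T
  set Θ : Set ({ t // t ∈ T } → M) := {θ | ∃ g ∈ G, ∀ t : { t // t ∈ T }, θ t = g ↑t} with hΘdef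
  have hΘfin : Θ.Finite := by
    apply (Set.Finite.pi' (fun _ : { t // t ∈ T } => T.finite_toSet)).subset
    rintro θ ⟨g, hg, hθ⟩ 
    intro t
    rw [hθ]
    exact hG g hg _ t.2
  -- selection of a group element for each trace
  set gsel : ({ t // t ∈ T } → M) → (M ≃ₗ[ℝ] M) := fun θ => if h : θ ∈ Θ then h.choose else 1
    with hgseldef
  have hgsel : ∀ θ (h : θ ∈ Θ), gsel θ ∈ G ∧ ∀ t : { t // t ∈ T }, θ t = gsel θ ↑t := by
    intro θ h
    simp only [hgseldef, dif_pos h]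
    exact ⟨h.choose_spec.1, h.choose_spec.2⟩
  have agree : ∀ e f : M ≃ₗ[ℝ] M, (∀ t : { t // t ∈ T }, e ↑t = f ↑t) → ∀ x ∈ P, e x = f x := by
    intro e f hef x hx
    induction hx using Submodule.span_induction with
    | mem z hz => exact hef ⟨z, hz⟩
    | zero => simp
    | add a b _ _ ha hb => simp [map_add, ha, hb]
    | smul r a _ ha => simp [map_smul, ha]
  have hGP : ∀ g ∈ G, ∀ x ∈ P, g x ∈ P := by
    intro g hg x hx
    induction hx using Submodule.span_induction with
    | mem z hz => exact Submodule.subset_span (by simpa using hG g hg z hz)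
    | zero => simp
    | add a b _ _ ha hb => rw [map_add]; exact add_mem ha hb
    | smul r a _ ha => rw [map_smul]; exact Submodule.smul_mem _ _ ha
  refine ⟨fun x y => ∑ θ ∈ hΘfin.toFinset, B₀ (gsel θ (π x)) (gsel θ (π y)),
    fun x y => ?_, fun x y z => ?_, fun a x y => ?_, fun x hx hx0 => ?_, ?_⟩
  · exact Finset.sum_congr rfl fun θ _ => hB₀symm _ _
  · rw [← Finset.sum_add_distrib]
    exact Finset.sum_congr rfl fun θ _ => by rw [map_add, map_add, hB₀add]
  · rw [Finset.mul_sum]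
    exact Finset.sum_congr rfl fun θ _ => by rw [map_smul, map_smul, hB₀smul]
  · -- positivity
    have hidmem : (fun t : { t // t ∈ T } => (t : M)) ∈ Θ := ⟨1, one_mem G, fun t => rfl⟩
    refine Finset.sum_pos' (fun θ _ => hB₀nonneg _) ⟨_, hΘfin.mem_toFinset.2 hidmem, ?_⟩
    have h1 : gsel _ (π x) = π x := (agree _ 1 (fun t => ((hgsel _ hidmem).2 t).symm) _ 
      (by rw [hπleft x hx]; exact hx)).trans rfl
    rw [hπleft x hx] at h1 ⊢
    rw [h1]
    exact hB₀pos x hx0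
  · -- invariance
    intro g hg x hx y hy
    have hgx : g x ∈ P := hGP g hg x hx
    have hgy : g y ∈ P := hGP g hg y hy
    have key : ∀ z ∈ P, ∀ θ (hθ : θ ∈ Θ),
        gsel (fun t : { t // t ∈ T } => θ ⟨g ↑t, hG g hg _ t.2⟩) z = gsel θ (g z) := by
      intro z hz θ hθ
      have hθ' : (fun t : { t // t ∈ T } => θ ⟨g ↑t, hG g hg _ t.2⟩) ∈ Θ := by
        refine ⟨gsel θ * g, mul_mem (hgsel θ hθ).1 hg, fun t => ?_⟩
        show θ ⟨g ↑t, hG g hg _ t.2⟩ = _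
        rw [(hgsel θ hθ).2 ⟨g ↑t, hG g hg _ t.2⟩]
        rfl
      have := agree (gsel _) (gsel θ * g) (fun t => by
        rw [← (hgsel _ hθ').2 t, (hgsel θ hθ).2 ⟨g ↑t, hG g hg _ t.2⟩]; rfl) z hz
      rw [this]
      rfl
    show (∑ θ ∈ hΘfin.toFinset, B₀ (gsel θ (π (g x))) (gsel θ (π (g y)))) =
      ∑ θ ∈ hΘfin.toFinset, B₀ (gsel θ (π x)) (gsel θ (π y))
    rw [hπleft x hx, hπleft y hy, hπleft _ hgx, hπleft _ hgy]
    refine Finset.sum_bij' (fun θ _ => fun t : { t // t ∈ T } => θ ⟨g ↑t, hG g hg _ t.2⟩)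
      (fun θ _ => fun t : { t // t ∈ T } => θ ⟨g⁻¹ ↑t, hG g⁻¹ (inv_mem hg) _ t.2⟩)
      ?_ ?_ ?_ ?_ ?_
    · intro θ hθ
      rw [Set.Finite.mem_toFinset] at hθ ⊢
      obtain ⟨e, he, hespec⟩ := hθ
      exact ⟨e * g, mul_mem he hg, fun t => by
        show θ ⟨g ↑t, hG g hg _ t.2⟩ = _; rw [hespec]; rfl⟩
    · intro θ hθ
      rw [Set.Finite.mem_toFinset] at hθ ⊢
      obtain ⟨e, he, hespec⟩ := hθ
      exact ⟨e * g⁻¹, mul_mem he (inv_mem hg), fun t => by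
        show θ ⟨g⁻¹ ↑t, hG g⁻¹ (inv_mem hg) _ t.2⟩ = _; rw [hespec]; rfl⟩
    · intro θ hθ
      funext t
      show θ ⟨g ↑(⟨g⁻¹ ↑t, hG g⁻¹ (inv_mem hg) _ t.2⟩ : { t // t ∈ T }),
        hG g hg _ (hG g⁻¹ (inv_mem hg) _ t.2)⟩ = θ t
      congr 1
      exact Subtype.ext (g.apply_symm_apply ↑t)
    · intro θ hθ
      funext t
      show θ ⟨g⁻¹ ↑(⟨g ↑t, hG g hg _ t.2⟩ : { t // t ∈ T }),
        hG g⁻¹ (inv_mem hg) _ (hG g hg _ t.2)⟩ = θ t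
      congr 1
      exact Subtype.ext (g.symm_apply_apply ↑t)
    · intro θ hθ
      rw [Set.Finite.mem_toFinset] at hθ
      rw [key x hx θ hθ, key y hy θ hθ]

end AuxForms



/-- Data of a finite crystallographic root system in a pair of vector spaces `V`, `V'`
(in perfect duality via `pair`), with a chosen base `Δ` and a cocharacter lattice `X`. -/
structure RootSystemData (V V' : Type) [AddCommGroup V] [Module ℝ V]
    [FiniteDimensional ℝ V] [AddCommGroup V'] [Module ℝ V'] [FiniteDimensional ℝ V'] where
  /-- The canonical pairing between `V` and `V'`. -/
  pair : V →ₗ[ℝ] V' →ₗ[ℝ] ℝ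
  /-- The (finite) set of roots. -/
  R : Finset V
  /-- The coroot attached to a root. -/
  coroot : V → V'
  root_ne_zero : ∀ α ∈ R, α ≠ (0 : V)
  neg_mem : ∀ α ∈ R, -α ∈ R
  coroot_neg : ∀ α ∈ R, coroot (-α) = -coroot α
  pair_self_eq_two : ∀ α ∈ R, pair α (coroot α) = 2
  crystallographic : ∀ α ∈ R, ∀ β ∈ R, ∃ n : ℤ, pair α (coroot β) = (n : ℝ)
  reflect_root_mem : ∀ α ∈ R, ∀ β ∈ R, β - pair β (coroot α) • α ∈ R
  reflect_coroot_mem : ∀ α ∈ R, ∀ β ∈ R,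
    coroot β - pair α (coroot β) • coroot α ∈ coroot '' R
  /-- The chosen base (set of simple roots). -/
  Δ : Finset V
  base_subset : Δ ⊆ R
  base_indep : LinearIndependent ℝ (fun a : (Δ : Set V) => (a : V))
  base_generates : ∀ α ∈ R,
    α ∈ AddSubmonoid.closure (Δ : Set V) ∨ -α ∈ AddSubmonoid.closure (Δ : Set V)
  /-- The lattice `X∨`. -/
  X : AddSubgroup V'
  coroot_mem_X : ∀ α ∈ R, coroot α ∈ X
  X_le_span : (X : Set V') ⊆ (Submodule.span ℝ (coroot '' (R : Set V)) : Set V')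
  pair_X_int : ∀ α ∈ R, ∀ x ∈ X, ∃ n : ℤ, pair α x = (n : ℝ)

namespace RootSystemData

variable {V V' : Type} [AddCommGroup V] [Module ℝ V] [FiniteDimensional ℝ V]
  [AddCommGroup V'] [Module ℝ V'] [FiniteDimensional ℝ V']
  (D : RootSystemData V V')

/-- The set `R₊` of positive roots: roots which are `ℕ`-linear combinations of the base. -/
def Rpos : Finset V := D.R.filter fun α => α ∈ AddSubmonoid.closure (D.Δ : Set V)

/-- The coroot lattice `Q∨`. -/
def Qc : AddSubgroup V' := AddSubgroup.closure (D.coroot '' (D.R : Set V))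

/-- The positive cone `Q∨₊` generated by the coroots of the positive roots. -/
def Qpos : AddSubmonoid V' := AddSubmonoid.closure (D.coroot '' (D.Rpos : Set V))

/-- The dominance order: `ν ≤ λ` iff `λ - ν ∈ Q∨₊`. -/
def leQ (ν lam : V') : Prop := lam - ν ∈ D.Qpos

/-- Dominance: `ν` is dominant iff `⟨α, ν⟩ ≥ 0` for every positive root `α`. -/
def Dominant (ν : V') : Prop := ∀ α ∈ D.Rpos, 0 ≤ D.pair α ν

/-- The set `X∨₊` of dominant elements of the lattice. -/
def Xplus : Set V' := {x | x ∈ D.X ∧ D.Dominant x}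

/-- The set `M` of minimal elements of `X∨₊ \ {0}` for the dominance order. -/
def MSet : Set V' :=
  {μ | μ ∈ D.Xplus ∧ μ ≠ 0 ∧ ∀ ν ∈ D.Xplus, ν ≠ 0 → D.leQ ν μ → ν = μ}

/-- The reflection on `V` attached to a root `α`. -/
def reflV (α : V) (hα : α ∈ D.R) : V ≃ₗ[ℝ] V :=
  Module.reflection (show D.pair.flip (D.coroot α) α = 2 from D.pair_self_eq_two α hα)

/-- The reflection on `V'` attached to a root `α`. -/
def reflV' (α : V) (hα : α ∈ D.R) : V' ≃ₗ[ℝ] V' :=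
  Module.reflection (show D.pair α (D.coroot α) = 2 from D.pair_self_eq_two α hα)

/-- The Weyl group `W`, acting simultaneously on `V` (first component)
and on `V'` (second component); it is generated by the pairs of reflections
attached to the roots. -/
def weyl : Subgroup ((V ≃ₗ[ℝ] V) × (V' ≃ₗ[ℝ] V')) :=
  Subgroup.closure {g | ∃ α, ∃ hα : α ∈ D.R, g = (D.reflV α hα, D.reflV' α hα)}

/-- The orbit `Wμ` of `μ ∈ V'` under the Weyl group. -/
def Worbit (μ : V') : Set V' := {ν | ∃ g ∈ D.weyl, ν = g.2 μ}

/-- The set `Ω(λ) = {ν ∈ X∨ : wν ≤ λ for all w ∈ W}`. -/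
def Omega (lam : V') : Set V' :=
  {ν | ν ∈ D.X ∧ ∀ g ∈ D.weyl, D.leQ (g.2 ν) lam}

/-- Two roots are linked when they are non-orthogonal. -/
def Linked (α β : V) : Prop := α ∈ D.R ∧ β ∈ D.R ∧ D.pair α (D.coroot β) ≠ 0

/-- Two roots lie in the same irreducible component iff they are connected by a
chain of non-orthogonal roots. -/
def SameComponent (α β : V) : Prop := Relation.EqvGen D.Linked α β

/-- The half-sum `ρ` of the positive roots. -/
def rho : V := (2 : ℝ)⁻¹ • ∑ α ∈ D.Rpos, α

/-- A `W`-invariant inner product on `V'`. -/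
structure WInvInner where
  form : V' →ₗ[ℝ] V' →ₗ[ℝ] ℝ
  symm : ∀ x y, form x y = form y x
  posdef : ∀ x, x ≠ 0 → 0 < form x x
  invariant : ∀ g ∈ D.weyl, ∀ x y, form (g.2 x) (g.2 y) = form x y

/-- `β` is a root whose coroot is short: for every `W`-invariant inner product `B` on `V'`,
`B(β∨, β∨) ≤ B(α∨, α∨)` for every root `α` in the same irreducible component as `β`. -/
def IsShortCoroot (β : V) : Prop :=
  β ∈ D.R ∧ ∀ B : D.WInvInner, ∀ α ∈ D.R, D.SameComponent α β →
    B.form (D.coroot β) (D.coroot β) ≤ B.form (D.coroot α) (D.coroot α)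

end RootSystemData

namespace RootSystemData

variable {V V' : Type} [AddCommGroup V] [Module ℝ V] [FiniteDimensional ℝ V]
  [AddCommGroup V'] [Module ℝ V'] [FiniteDimensional ℝ V']
  (D : RootSystemData V V')

/-- Elements of the `ℕ`-closure of the base are `ℕ`-combinations. -/
lemma mem_closure_repr {x : V} (hx : x ∈ AddSubmonoid.closure (D.Δ : Set V)) :
    ∃ c : V →₀ ℕ, ↑c.support ⊆ (D.Δ : Set V) ∧ x = c.sum fun v n => (n : ℝ) • v := by
  refine AddSubmonoid.closure_induction ?_ ?_ ?_ hx
  · intro v hv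
    refine ⟨Finsupp.single v 1, ?_, ?_⟩
    · intro w hw
      have h := Finset.mem_singleton.1 (Finsupp.support_single_subset (Finset.mem_coe.1 hw))
      simpa [h] using hv
    · rw [Finsupp.sum_single_index] <;> simp
  · exact ⟨0, by simp⟩
  · rintro x y - - ⟨c, hc, hcx⟩ ⟨d, hd, hdx⟩
    refine ⟨c + d, ?_, ?_⟩
    · intro w hw
      rcases Finset.mem_union.1 (Finsupp.support_add (by exact_mod_cast hw)) with h | h
      · exact hc h
      · exact hd h
    · rw [Finsupp.sum_add_index' (by simp) (by intro a b₁ b₂; rw [Nat.cast_add, add_smul])]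
      rw [hcx, hdx]

/-- The cone generated by the base is pointed. -/
lemma closure_pointed {x y : V} (hx : x ∈ AddSubmonoid.closure (D.Δ : Set V))
    (hy : y ∈ AddSubmonoid.closure (D.Δ : Set V)) (hxy : x + y = 0) : x = 0 ∧ y = 0 := by
  obtain ⟨c, hc, hcx⟩ := D.mem_closure_repr hx
  obtain ⟨d, hd, hdx⟩ := D.mem_closure_repr hy
  set l : V →₀ ℝ := (c + d).mapRange (Nat.cast : ℕ → ℝ) Nat.cast_zero with hl
  have hsup : ↑l.support ⊆ (D.Δ : Set V) := by
    intro w hw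
    have hw' : w ∈ (c + d).support := by
      have := Finsupp.support_mapRange (f := (Nat.cast : ℕ → ℝ)) (hf := Nat.cast_zero)
        (g := c + d)
      exact this (by exact_mod_cast hw)
    rcases Finset.mem_union.1 (Finsupp.support_add hw') with h | h
    · exact hc h
    · exact hd h
  have hl0 : Finsupp.linearCombination ℝ (id : V → V) l = 0 := by
    rw [Finsupp.linearCombination_apply]
    rw [hl, Finsupp.sum_mapRange_index (by simp)]
    simp only [id_eq]
    rw [Finsupp.sum_add_index' (by simp) (by intro a b₁ b₂; rw [Nat.cast_add, add_smul]),
      ← hcx, ← hdx, hxy]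
  have hlzero : l = 0 := by
    refine (linearIndepOn_iff (v := (id : V → V)) (s := (D.Δ : Set V))).1 D.base_indep l (Finsupp.mem_supported ℝ l |>.2 hsup) hl0
  have hcd : ∀ v, c v = 0 ∧ d v = 0 := by
    intro v
    have : ((c + d) v : ℝ) = 0 := by
      have := congrArg (fun f => f v) hlzero
      simpa [hl, Finsupp.mapRange_apply] using this
    have h0 : c v + d v = 0 := by exact_mod_cast this
    exact Nat.add_eq_zero.1 h0
  constructor
  · rw [hcx]
    have : c = 0 := Finsupp.ext fun v => (hcd v).1
    simp [this]
  · rw [hdx]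
    have : d = 0 := Finsupp.ext fun v => (hcd v).2
    simp [this]

section Gamma

variable {γ : V} (hγ : γ ∈ D.R)
  (hhigh : ∀ α ∈ D.R, γ - α ∈ AddSubmonoid.closure (D.Δ : Set V))

include hγ hhigh

lemma gamma_mem_closure : γ ∈ AddSubmonoid.closure (D.Δ : Set V) := by
  rcases D.base_generates γ hγ with h | h
  · exact h
  · have h2 : γ - -γ ∈ AddSubmonoid.closure (D.Δ : Set V) := hhigh (-γ) (D.neg_mem γ hγ)
    rw [sub_neg_eq_add] at h2
    have : γ = (γ + γ) + -γ := by abel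
    rw [this]
    exact add_mem h2 h

lemma gamma_ne_zero : γ ≠ 0 := D.root_ne_zero γ hγ

lemma gamma_mem_Rpos : γ ∈ D.Rpos :=
  Finset.mem_filter.2 ⟨hγ, D.gamma_mem_closure hγ hhigh⟩

/-- Part A: the coroot of the highest root is dominant. -/
lemma dominant_coroot_gamma : D.Dominant (D.coroot γ) := by
  intro α hα
  rw [Rpos, Finset.mem_filter] at hα
  obtain ⟨hαR, hαpos⟩ := hα
  by_contra hneg
  push_neg at hneg
  obtain ⟨n, hn⟩ := D.crystallographic α hαR γ hγ
  have hnneg : n < 0 := by exact_mod_cast hn ▸ hneg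
  set m : ℕ := (-n).toNat with hm
  have hmZ : (m : ℤ) = -n := Int.toNat_of_nonneg (by omega)
  have hmcast : (n : ℝ) = -(m : ℝ) := by
    have : ((m : ℤ) : ℝ) = ((-n : ℤ) : ℝ) := congrArg (fun z : ℤ => (z : ℝ)) hmZ
    push_cast at this
    linarith
  have hm1 : 1 ≤ m := by omega
  have hβ := D.reflect_root_mem γ hγ α hαR
  have hu : γ - (α - D.pair α (D.coroot γ) • γ) ∈ AddSubmonoid.closure (D.Δ : Set V) :=
    hhigh _ hβ
  have hγc := D.gamma_mem_closure hγ hhigh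
  have hsm : ((m - 1 : ℕ) : ℝ) • γ ∈ AddSubmonoid.closure (D.Δ : Set V) := by
    rw [Nat.cast_smul_eq_nsmul]
    exact AddSubmonoid.nsmul_mem _ hγc _
  have hx : α + ((m - 1 : ℕ) : ℝ) • γ ∈ AddSubmonoid.closure (D.Δ : Set V) :=
    add_mem hαpos hsm
  have hsum : (α + ((m - 1 : ℕ) : ℝ) • γ) + (γ - (α - D.pair α (D.coroot γ) • γ)) = 0 := by
    rw [hn, hmcast]
    have hc : ((m - 1 : ℕ) : ℝ) = (m : ℝ) - 1 := by
      have : (1 : ℕ) ≤ m := hm1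
      push_cast [Nat.cast_sub this]
      ring
    rw [hc]
    module
  have h1 := (D.closure_pointed hx hu hsum).1
  have h2 := D.closure_pointed hαpos hsm h1
  exact D.root_ne_zero α hαR h2.1

/-- P5 : pairings of other roots against the coroot of the highest root are at most 1. -/
lemma pair_le_one {α : V} (hα : α ∈ D.R) (hne : α ≠ γ) : D.pair α (D.coroot γ) ≤ 1 := by
  by_contra hgt
  push_neg at hgt
  obtain ⟨n, hn⟩ := D.crystallographic α hα γ hγ
  have hn2 : 2 ≤ n := by
    have : (1 : ℝ) < n := hn ▸ hgt
    exact_mod_cast this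
  have hβ := D.reflect_root_mem γ hγ α hα
  have hu : γ - -(α - D.pair α (D.coroot γ) • γ) ∈ AddSubmonoid.closure (D.Δ : Set V) :=
    hhigh _ (D.neg_mem _ hβ)
  have hv : γ - α ∈ AddSubmonoid.closure (D.Δ : Set V) := hhigh α hα
  have hγc := D.gamma_mem_closure hγ hhigh
  have hw : ((n - 2).toNat : ℝ) • γ ∈ AddSubmonoid.closure (D.Δ : Set V) := by
    rw [Nat.cast_smul_eq_nsmul]
    exact AddSubmonoid.nsmul_mem _ hγc _
  have hcast : (((n - 2).toNat : ℕ) : ℝ) = (n : ℝ) - 2 := by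
    have h1 : (((n - 2).toNat : ℕ) : ℤ) = n - 2 := Int.toNat_of_nonneg (by omega)
    have : ((((n - 2).toNat : ℕ) : ℤ) : ℝ) = ((n - 2 : ℤ) : ℝ) := congrArg (fun z : ℤ => (z : ℝ)) h1
    push_cast at this
    linarith [this]
  have hsum : ((γ - -(α - D.pair α (D.coroot γ) • γ)) + (γ - α)) +
      (((n - 2).toNat : ℝ) • γ) = 0 := by
    rw [hn, hcast]
    module
  have h1 := D.closure_pointed (add_mem hu hv) hw hsum
  have h2 := D.closure_pointed hu hv h1.1
  exact hne (by have := h2.2; have : γ - α = 0 := this; rw [sub_eq_zero] at this; exact this.symm)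

end Gamma

end RootSystemData
namespace RootSystemData

variable {V V' : Type} [AddCommGroup V] [Module ℝ V] [FiniteDimensional ℝ V]
  [AddCommGroup V'] [Module ℝ V'] [FiniteDimensional ℝ V']
  (D : RootSystemData V V')

lemma reflV_apply {α : V} (hα : α ∈ D.R) (a : V) :
    D.reflV α hα a = a - D.pair a (D.coroot α) • α := by
  simp [RootSystemData.reflV, Module.reflection_apply]

lemma reflV'_apply {α : V} (hα : α ∈ D.R) (x : V') :
    D.reflV' α hα x = x - D.pair α x • D.coroot α := by
  simp [RootSystemData.reflV', Module.reflection_apply]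

lemma reflV_self {α : V} (hα : α ∈ D.R) : D.reflV α hα α = -α :=
  Module.reflection_apply_self _

lemma reflV'_self {α : V} (hα : α ∈ D.R) : D.reflV' α hα (D.coroot α) = -D.coroot α :=
  Module.reflection_apply_self _

lemma gen_mem_weyl {α : V} (hα : α ∈ D.R) : (D.reflV α hα, D.reflV' α hα) ∈ D.weyl :=
  Subgroup.subset_closure ⟨α, hα, rfl⟩

lemma coroot_ne_zero {α : V} (hα : α ∈ D.R) : D.coroot α ≠ 0 := by
  intro h
  have := D.pair_self_eq_two α hα
  rw [h] at this
  simp at this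

/-- The conjunction of basic properties of an element of the Weyl group. -/
def weylProp (p : (V ≃ₗ[ℝ] V) × (V' ≃ₗ[ℝ] V')) : Prop :=
    (∀ (a : V) (x : V'), D.pair (p.1 a) (p.2 x) = D.pair a x) ∧
    (∀ a ∈ D.R, p.1 a ∈ D.R) ∧ (∀ a ∈ D.R, p.1.symm a ∈ D.R) ∧
    (∀ x' ∈ D.coroot '' (D.R : Set V), p.2 x' ∈ D.coroot '' (D.R : Set V)) ∧
    (∀ x' ∈ D.coroot '' (D.R : Set V), p.2.symm x' ∈ D.coroot '' (D.R : Set V)) ∧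
    (∀ x : V', p.2 x - x ∈ Submodule.span ℝ (D.coroot '' (D.R : Set V)))

/-- The basic properties of elements of the Weyl group. -/
lemma weyl_props {p : (V ≃ₗ[ℝ] V) × (V' ≃ₗ[ℝ] V')} (hp : p ∈ D.weyl) : D.weylProp p := by
  have hp' : p ∈ Subgroup.closure {g : (V ≃ₗ[ℝ] V) × (V' ≃ₗ[ℝ] V') |
      ∃ α, ∃ hα : α ∈ D.R, g = (D.reflV α hα, D.reflV' α hα)} := hp
  clear hp
  refine Subgroup.closure_induction (p := fun q _ => D.weylProp q) ?_ ?_ ?_ ?_ hp'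
  · rintro g ⟨α, hα, rfl⟩
    unfold weylProp
    have h2 := D.pair_self_eq_two α hα
    refine ⟨?_, ?_, ?_, ?_, ?_, ?_⟩
    · intro a x
      rw [D.reflV_apply hα, D.reflV'_apply hα]
      simp only [map_sub, map_smul, LinearMap.sub_apply, LinearMap.smul_apply, smul_eq_mul, h2]
      ring
    · intro a ha
      rw [D.reflV_apply hα]
      exact D.reflect_root_mem α hα a ha
    · intro a ha
      have hsymm : (D.reflV α hα).symm = D.reflV α hα := Module.reflection_symm _
      rw [hsymm, D.reflV_apply hα]
      exact D.reflect_root_mem α hα a ha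
    · rintro x' ⟨β, hβ, rfl⟩
      rw [D.reflV'_apply hα]
      exact D.reflect_coroot_mem α hα β (Finset.mem_coe.1 hβ)
    · rintro x' ⟨β, hβ, rfl⟩
      have hsymm : (D.reflV' α hα).symm = D.reflV' α hα := Module.reflection_symm _
      rw [hsymm, D.reflV'_apply hα]
      exact D.reflect_coroot_mem α hα β (Finset.mem_coe.1 hβ)
    · intro x
      rw [D.reflV'_apply hα]
      have : x - D.pair α x • D.coroot α - x = -(D.pair α x • D.coroot α) := by abel
      rw [this]
      exact Submodule.neg_mem _ (Submodule.smul_mem _ _ (Submodule.subset_span ⟨α, Finset.mem_coe.2 hα, rfl⟩))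
  · exact ⟨fun a x => rfl, fun a ha => ha, fun a ha => ha, fun x hx => hx, fun x hx => hx,
      fun x => by simp⟩
  · rintro g h _ _ ihg ihh
    obtain ⟨a1, b1, b1', c1, c1', d1⟩ := ihg
    obtain ⟨a2, b2, b2', c2, c2', d2⟩ := ihh
    unfold weylProp
    refine ⟨fun a x => ?_, fun a ha => ?_, fun a ha => ?_, fun x hx => ?_, fun x hx => ?_,
      fun x => ?_⟩
    · rw [show (g * h).1 a = g.1 (h.1 a) from rfl, show (g * h).2 x = g.2 (h.2 x) from rfl,
        a1, a2]
    · exact b1 _ (b2 a ha)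
    · rw [show (g * h).1.symm a = h.1.symm (g.1.symm a) from rfl]
      exact b2' _ (b1' a ha)
    · rw [show (g * h).2 x = g.2 (h.2 x) from rfl]
      exact c1 _ (c2 x hx)
    · rw [show (g * h).2.symm x = h.2.symm (g.2.symm x) from rfl]
      exact c2' _ (c1' x hx)
    · rw [show (g * h).2 x = g.2 (h.2 x) from rfl]
      have : g.2 (h.2 x) - x = (g.2 (h.2 x) - h.2 x) + (h.2 x - x) := by abel
      rw [this]
      exact add_mem (d1 _) (d2 x)
  · rintro g _ ih
    obtain ⟨a1, b1, b1', c1, c1', d1⟩ := ih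
    unfold weylProp
    refine ⟨fun a x => ?_, fun a ha => ?_, fun a ha => ?_, fun x hx => ?_, fun x hx => ?_,
      fun x => ?_⟩
    · rw [show (g⁻¹).1 a = g.1.symm a from rfl, show (g⁻¹).2 x = g.2.symm x from rfl]
      conv_rhs => rw [show a = g.1 (g.1.symm a) from (g.1.apply_symm_apply a).symm,
        show x = g.2 (g.2.symm x) from (g.2.apply_symm_apply x).symm]
      rw [a1]
    · exact b1' a ha
    · rw [show (g⁻¹).1.symm = g.1 from rfl]
      exact b1 a ha
    · exact c1' x hx
    · rw [show (g⁻¹).2.symm = g.2 from rfl]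
      exact c1 x hx
    · rw [show (g⁻¹).2 x = g.2.symm x from rfl]
      have h1 := d1 (g.2.symm x)
      rw [g.2.apply_symm_apply] at h1
      have : g.2.symm x - x = -(x - g.2.symm x) := by abel
      rw [this]
      exact Submodule.neg_mem _ h1

lemma pair_nonneg_on_closure {d : V'} (h0 : ∀ δ ∈ D.Δ, 0 ≤ D.pair δ d) :
    ∀ x ∈ AddSubmonoid.closure (D.Δ : Set V), 0 ≤ D.pair x d := by
  intro x hx
  refine AddSubmonoid.closure_induction ?_ ?_ ?_ hx
  · intro v hv
    exact h0 v (Finset.mem_coe.1 hv)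
  · simp
  · intro a b _ _ ha hb
    rw [map_add, LinearMap.add_apply]
    exact add_nonneg ha hb

lemma pair_zero_on_closure {d : V'} (h0 : ∀ δ ∈ D.Δ, D.pair δ d = 0) :
    ∀ x ∈ AddSubmonoid.closure (D.Δ : Set V), D.pair x d = 0 := by
  intro x hx
  refine AddSubmonoid.closure_induction ?_ ?_ ?_ hx
  · intro v hv
    exact h0 v (Finset.mem_coe.1 hv)
  · simp
  · intro a b _ _ ha hb
    rw [map_add, LinearMap.add_apply, ha, hb, add_zero]

/-- An invariant form on `V`, positive definite on the span of the roots, computing the pairing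
with coroots. -/
lemma exists_formV :
    ∃ C : V → V → ℝ, (∀ x y, C x y = C y x) ∧ (∀ x y z, C (x + y) z = C x z + C y z) ∧
      (∀ (a : ℝ) (x y : V), C (a • x) y = a * C x y) ∧
      (∀ v ∈ Submodule.span ℝ (D.R : Set V), v ≠ 0 → 0 < C v v) ∧
      (∀ (α : V), α ∈ D.R → ∀ v ∈ Submodule.span ℝ (D.R : Set V),
        D.pair v (D.coroot α) * C α α = 2 * C v α) := by
  classical
  set G : Subgroup (V ≃ₗ[ℝ] V) := Subgroup.map (MonoidHom.fst _ _) D.weyl with hG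
  have hGT : ∀ g ∈ G, ∀ t ∈ D.R, g t ∈ D.R := by
    rintro g hg t ht
    obtain ⟨p, hp, rfl⟩ := Subgroup.mem_map.1 hg
    exact (D.weyl_props hp).2.1 t ht
  obtain ⟨C, hsymm, hadd, hsmul, hpos, hinv⟩ := exists_avg_form D.R G hGT
  have Cneg : ∀ x y : V, C (-x) y = -C x y := by
    intro x y
    rw [← neg_one_smul ℝ x, hsmul]
    ring
  have Csub : ∀ x y z : V, C (x - y) z = C x z - C y z := by
    intro x y z
    rw [sub_eq_add_neg, hadd, Cneg]
    ring
  refine ⟨C, hsymm, hadd, hsmul, hpos, ?_⟩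
  intro α hα v hv
  have hαspan : α ∈ Submodule.span ℝ (D.R : Set V) :=
    Submodule.subset_span (Finset.mem_coe.2 hα)
  have hgmem : D.reflV α hα ∈ G :=
    Subgroup.mem_map.2 ⟨_, D.gen_mem_weyl hα, rfl⟩
  have heq := hinv _ hgmem v hv α hαspan
  rw [D.reflV_apply hα v, D.reflV_self hα] at heq
  have hexp : C (v - D.pair v (D.coroot α) • α) (-α)
      = -(C v α) + D.pair v (D.coroot α) * C α α := by
    rw [hsymm _ (-α), Cneg, hsymm α _, Csub, hsmul]
    ring
  rw [hexp] at heq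
  linarith

/-- The coroots of the simple roots are linearly independent. -/
lemma coroot_simple_indep :
    LinearIndependent ℝ (fun a : (D.Δ : Set V) => D.coroot ↑a) := by
  classical
  obtain ⟨C, hsymm, hadd, hsmul, hpos, hpolar⟩ := D.exists_formV
  haveI : Fintype (D.Δ : Set V) := D.Δ.finite_toSet.fintype
  have Czero : ∀ y : V, C 0 y = 0 := by
    intro y
    have : C ((0 : ℝ) • (0 : V)) y = 0 * C 0 y := hsmul 0 0 y
    simpa using this
  have Csum : ∀ (s : Finset ↥(D.Δ : Set V)) (f : ↥(D.Δ : Set V) → ℝ) (y : V),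
      C (∑ j ∈ s, f j • (j : V)) y = ∑ j ∈ s, f j * C (j : V) y := by
    intro s f y
    refine Finset.induction_on s ?_ ?_
    · simpa using Czero y
    · intro a t hnotmem ih
      rw [Finset.sum_insert hnotmem, Finset.sum_insert hnotmem, hadd, hsmul, ih]
  rw [Fintype.linearIndependent_iff]
  intro g hg
  have hmemΔR : ∀ j : (D.Δ : Set V), (j : V) ∈ D.R := fun j => D.base_subset (Finset.mem_coe.1 j.2)
  have hmemspan : ∀ j : (D.Δ : Set V), (j : V) ∈ Submodule.span ℝ (D.R : Set V) :=
    fun j => Submodule.subset_span (Finset.mem_coe.2 (hmemΔR j))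
  have hjne : ∀ j : (D.Δ : Set V), (j : V) ≠ 0 := fun j => D.root_ne_zero _ (hmemΔR j)
  have hCjj : ∀ j : (D.Δ : Set V), 0 < C j j := fun j => hpos _ (hmemspan j) (hjne j)
  set z : V := ∑ j : (D.Δ : Set V), (2 * g j / C j j) • (j : V) with hz
  have hzspan : z ∈ Submodule.span ℝ (D.R : Set V) :=
    Submodule.sum_mem _ fun j _ => Submodule.smul_mem _ _ (hmemspan j)
  have hCz : ∀ v ∈ Submodule.span ℝ (D.R : Set V), C v z = 0 := by
    intro v hv
    rw [hsymm, hz, Csum]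
    have hterm : ∀ j : (D.Δ : Set V), (2 * g j / C j j) * C (j : V) v
        = g j * D.pair v (D.coroot j) := by
      intro j
      have h1 := hpolar j (hmemΔR j) v hv
      have h2 := (hCjj j).ne'
      rw [hsymm (↑j : V) v, div_mul_eq_mul_div, div_eq_iff h2]
      calc 2 * g j * C v ↑j = g j * (2 * C v ↑j) := by ring
      _ = g j * ((D.pair v) (D.coroot ↑j) * C ↑j ↑j) := by rw [h1]
      _ = g j * (D.pair v) (D.coroot ↑j) * C ↑j ↑j := by ring
    rw [Finset.sum_congr rfl fun j _ => hterm j]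
    have : ∑ j : (D.Δ : Set V), g j * D.pair v (D.coroot j)
        = D.pair v (∑ j : (D.Δ : Set V), g j • D.coroot j) := by
      rw [map_sum]
      exact Finset.sum_congr rfl fun j _ => by rw [map_smul, smul_eq_mul]
    rw [this, hg, map_zero]
  have hz0 : z = 0 := by
    by_contra hne
    exact absurd (hCz z hzspan) (hpos z hzspan hne).ne'
  have hcoef := Fintype.linearIndependent_iff.1 D.base_indep (fun j => 2 * g j / C j j)
    (by rw [← hz]; exact hz0)
  intro i
  have hc := hcoef i
  have h2 := (hCjj i).ne'
  rcases div_eq_zero_iff.1 hc with h | h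
  · linarith
  · exact absurd h h2

/-- A linear functional positive on all simple coroots. -/
lemma exists_pos_functional :
    ∃ F : V' →ₗ[ℝ] ℝ, ∀ δ ∈ D.Δ, F (D.coroot δ) = 1 := by
  classical
  have hindep := D.coroot_simple_indep
  set s : Set V' := Set.range (fun a : (D.Δ : Set V) => D.coroot ↑a) with hs
  have hscoe : LinearIndepOn ℝ id s := hindep.linearIndepOn_id
  have hmem : ∀ δ ∈ D.Δ, D.coroot δ ∈ hscoe.extend (Set.subset_univ s) := by
    intro δ hδ
    exact hscoe.subset_extend _ ⟨⟨δ, Finset.mem_coe.2 hδ⟩, rfl⟩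
  set b : Module.Basis (hscoe.extend (Set.subset_univ s)) ℝ V' := Module.Basis.extend hscoe with hb
  refine ⟨∑ δ ∈ D.Δ.attach, b.coord ⟨D.coroot ↑δ, hmem ↑δ δ.2⟩, ?_⟩
  intro δ₀ hδ₀
  rw [LinearMap.sum_apply]
  have hb_self : ∀ (x : hscoe.extend (Set.subset_univ s)), b x = ↑x :=
    fun x => Module.Basis.extend_apply_self hscoe x
  have hinj : Function.Injective (fun a : (D.Δ : Set V) => D.coroot ↑a) := hindep.injective
  have hrepr : b.repr (D.coroot δ₀)
      = Finsupp.single (⟨D.coroot δ₀, hmem δ₀ hδ₀⟩ : hscoe.extend (Set.subset_univ s)) 1 := by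
    conv_lhs => rw [show D.coroot δ₀ = b ⟨D.coroot δ₀, hmem δ₀ hδ₀⟩ from
      (hb_self ⟨D.coroot δ₀, hmem δ₀ hδ₀⟩).symm]
    exact b.repr_self _
  have hterm : ∀ δ : {x // x ∈ D.Δ},
      b.coord ⟨D.coroot ↑δ, hmem ↑δ δ.2⟩ (D.coroot δ₀)
        = if (⟨D.coroot δ₀, hmem δ₀ hδ₀⟩ : hscoe.extend (Set.subset_univ s))
            = (⟨D.coroot ↑δ, hmem ↑δ δ.2⟩ : hscoe.extend (Set.subset_univ s)) then 1 else 0 := by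
    intro δ
    rw [Module.Basis.coord_apply, hrepr, Finsupp.single_apply]
  rw [Finset.sum_congr rfl fun δ _ => hterm δ]
  rw [Finset.sum_eq_single_of_mem (⟨δ₀, hδ₀⟩ : {x // x ∈ D.Δ}) (Finset.mem_attach _ _)]
  · rw [if_pos rfl]
  · intro δ _ hne
    rw [if_neg]
    intro hcontra
    apply hne
    have hcc : D.coroot δ₀ = D.coroot ↑δ := congrArg Subtype.val hcontra
    have : (⟨δ₀, Finset.mem_coe.2 hδ₀⟩ : (D.Δ : Set V)) = ⟨↑δ, Finset.mem_coe.2 δ.2⟩ :=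
      hinj hcc
    exact Subtype.ext (congrArg Subtype.val this).symm
  
end RootSystemData
namespace RootSystemData

variable {V V' : Type} [AddCommGroup V] [Module ℝ V] [FiniteDimensional ℝ V]
  [AddCommGroup V'] [Module ℝ V'] [FiniteDimensional ℝ V']
  (D : RootSystemData V V')

/-- F1 : the invariant form evaluates coroots via the pairing. -/
lemma form_coroot (B : D.WInvInner) {α : V} (hα : α ∈ D.R) (x' : V') :
    2 * B.form x' (D.coroot α) = D.pair α x' * B.form (D.coroot α) (D.coroot α) := by
  have hinv := B.invariant _ (D.gen_mem_weyl hα) x' (D.coroot α)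
  rw [show ((D.reflV α hα, D.reflV' α hα) : (V ≃ₗ[ℝ] V) × (V' ≃ₗ[ℝ] V')).2 = D.reflV' α hα
      from rfl] at hinv
  rw [D.reflV'_self hα, D.reflV'_apply hα x'] at hinv
  simp only [map_sub, map_smul, map_neg, LinearMap.sub_apply, LinearMap.smul_apply,
    LinearMap.neg_apply, smul_eq_mul] at hinv
  linarith

lemma form_pos (B : D.WInvInner) {α : V} (hα : α ∈ D.R) :
    0 < B.form (D.coroot α) (D.coroot α) :=
  B.posdef _ (D.coroot_ne_zero hα)

section Gamma2

variable {γ : V} (hγ : γ ∈ D.R)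
  (hhigh : ∀ α ∈ D.R, γ - α ∈ AddSubmonoid.closure (D.Δ : Set V))

include hγ hhigh

/-- If the coroot of `β` is nonnegative on all simple roots, then it pairs positively with the
highest root. -/
lemma pair_gamma_coroot_pos {β : V} (hβ : β ∈ D.R)
    (hdom : ∀ δ ∈ D.Δ, 0 ≤ D.pair δ (D.coroot β)) : 0 < D.pair γ (D.coroot β) := by
  by_cases hcase : ∀ δ ∈ D.Δ, D.pair δ (D.coroot β) = 0
  · exfalso
    have hzero := D.pair_zero_on_closure hcase
    have h2 : D.pair β (D.coroot β) = 2 := D.pair_self_eq_two β hβ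
    rcases D.base_generates β hβ with h | h
    · rw [hzero β h] at h2
      norm_num at h2
    · have hz := hzero _ h
      rw [map_neg, LinearMap.neg_apply, h2] at hz
      norm_num at hz
  · push_neg at hcase
    obtain ⟨δ₀, hδ₀, hδ₀ne⟩ := hcase
    have hδ₀pos : 0 < D.pair δ₀ (D.coroot β) := lt_of_le_of_ne (hdom δ₀ hδ₀) (Ne.symm hδ₀ne)
    have hrest : 0 ≤ D.pair (γ - δ₀) (D.coroot β) :=
      D.pair_nonneg_on_closure hdom _ (hhigh δ₀ (D.base_subset hδ₀))
    have hxx : D.pair γ (D.coroot β) = D.pair δ₀ (D.coroot β) + D.pair (γ - δ₀) (D.coroot β) := by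
      have hsplit : γ = δ₀ + (γ - δ₀) := by abel
      conv_lhs => rw [hsplit]
      rw [map_add, LinearMap.add_apply]
    linarith

/-- Shortness of `γ∨`, main inequality. -/
lemma form_coroot_gamma_le (B : D.WInvInner) {α : V} (hα : α ∈ D.R) :
    B.form (D.coroot γ) (D.coroot γ) ≤ B.form (D.coroot α) (D.coroot α) := by
  classical
  obtain ⟨F, hF⟩ := D.exists_pos_functional
  set O : Finset V' := (D.R.image D.coroot).filter
    (fun d => ∃ p ∈ D.weyl, p.2 (D.coroot α) = d) with hO
  have hO0 : D.coroot α ∈ O := Finset.mem_filter.2 ⟨Finset.mem_image.2 ⟨α, hα, rfl⟩,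
    ⟨1, one_mem _, rfl⟩⟩
  obtain ⟨d, hdO, hdmax⟩ := O.exists_max_image F ⟨_, hO0⟩
  obtain ⟨hdim, p, hp, hpd⟩ := Finset.mem_filter.1 hdO
  obtain ⟨β, hβ, hβd⟩ := Finset.mem_image.1 hdim
  have hdset : d ∈ D.coroot '' (D.R : Set V) := ⟨β, Finset.mem_coe.2 hβ, hβd⟩
  -- the maximizer is dominant on simple roots
  have hdom : ∀ δ ∈ D.Δ, 0 ≤ D.pair δ d := by
    intro δ hδ
    have hδR := D.base_subset hδ
    have hmem2 : D.reflV' δ hδR d ∈ O := by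
      refine Finset.mem_filter.2 ⟨?_, ?_⟩
      · obtain ⟨β', hβ', hβ'd⟩ := (D.weyl_props (D.gen_mem_weyl hδR)).2.2.2.1 d hdset
        exact Finset.mem_image.2 ⟨β', Finset.mem_coe.1 hβ', hβ'd⟩
      · refine ⟨(D.reflV δ hδR, D.reflV' δ hδR) * p,
          mul_mem (D.gen_mem_weyl hδR) hp, ?_⟩
        show D.reflV' δ hδR (p.2 (D.coroot α)) = _
        rw [hpd]
    have hFle := hdmax _ hmem2
    rw [D.reflV'_apply hδR d, map_sub, map_smul, smul_eq_mul, hF δ hδ, mul_one] at hFle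
    linarith
  -- positivity of the pairing with γ
  have hq0 : 0 < D.pair γ d := by
    rw [← hβd]
    rw [← hβd] at hdom
    exact D.pair_gamma_coroot_pos hγ hhigh hβ hdom
  -- length transfer along the orbit
  have hlen : B.form d d = B.form (D.coroot α) (D.coroot α) := by
    conv_lhs => rw [← hpd]
    exact B.invariant p hp _ _
  by_cases hβγ : β = γ
  · rw [← hlen, ← hβd, hβγ]
  · have hℓβ : 0 < B.form (D.coroot β) (D.coroot β) := D.form_pos B hβ
    have hℓγ : 0 < B.form (D.coroot γ) (D.coroot γ) := D.form_pos B hγ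
    have hq' : 0 < D.pair γ (D.coroot β) := by rw [hβd]; exact hq0
    have hF2 : D.pair β (D.coroot γ) * B.form (D.coroot β) (D.coroot β)
        = D.pair γ (D.coroot β) * B.form (D.coroot γ) (D.coroot γ) := by
      have e1 := D.form_coroot B hβ (D.coroot γ)
      have e2 := D.form_coroot B hγ (D.coroot β)
      have e3 := B.symm (D.coroot γ) (D.coroot β)
      linarith
    have hp'pos : 0 < D.pair β (D.coroot γ) := by nlinarith
    obtain ⟨n, hn⟩ := D.crystallographic β hβ γ hγ
    have hn1 : D.pair β (D.coroot γ) = 1 := by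
      have hle := D.pair_le_one hγ hhigh hβ hβγ
      have h0 : (0 : ℝ) < n := hn ▸ hp'pos
      have h1 : (n : ℝ) ≤ 1 := hn ▸ hle
      have hn0 : 0 < n := by exact_mod_cast h0
      have hn1' : n ≤ 1 := by exact_mod_cast h1
      have : n = 1 := by omega
      rw [hn, this]
      norm_num
    obtain ⟨m, hm⟩ := D.crystallographic γ hγ β hβ
    have hq1 : 1 ≤ D.pair γ (D.coroot β) := by
      have h0 : (0 : ℝ) < m := hm ▸ hq'
      have hm0 : 0 < m := by exact_mod_cast h0
      have : 1 ≤ m := by omega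
      rw [hm]
      exact_mod_cast this
    rw [hn1, one_mul] at hF2
    rw [← hlen, ← hβd]
    nlinarith

/-- Part B : the coroot of the highest root is short. -/
lemma short_gamma : D.IsShortCoroot γ :=
  ⟨hγ, fun B α hα _ => D.form_coroot_gamma_le hγ hhigh B hα⟩

end Gamma2

end RootSystemData
namespace RootSystemData

variable {V V' : Type} [AddCommGroup V] [Module ℝ V] [FiniteDimensional ℝ V]
  [AddCommGroup V'] [Module ℝ V'] [FiniteDimensional ℝ V']
  (D : RootSystemData V V')

/-- Construction of a `W`-invariant inner product on `V'`. -/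
lemma exists_WInvInner : Nonempty D.WInvInner := by
  classical
  set P : Submodule ℝ V' := Submodule.span ℝ (D.coroot '' (D.R : Set V)) with hP
  obtain ⟨Cq, hqsymm, hqadd, hqsmul, hqnonneg, hqpos⟩ := exists_posdef_form (V' ⧸ P)
  set G' : Subgroup (V' ≃ₗ[ℝ] V') := Subgroup.map (MonoidHom.snd _ _) D.weyl with hG'
  have hG'T : ∀ g ∈ G', ∀ t ∈ D.R.image D.coroot, g t ∈ D.R.image D.coroot := by
    rintro g hg t ht
    obtain ⟨p, hp, rfl⟩ := Subgroup.mem_map.1 hg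
    obtain ⟨β, hβ, rfl⟩ := Finset.mem_image.1 ht
    obtain ⟨β', hβ', h⟩ := (D.weyl_props hp).2.2.2.1 (D.coroot β) ⟨β, Finset.mem_coe.2 hβ, rfl⟩
    exact Finset.mem_image.2 ⟨β', Finset.mem_coe.1 hβ', h⟩
  obtain ⟨C', hsymm', hadd', hsmul', hpos', hinv'⟩ :=
    exists_avg_form (D.R.image D.coroot) G' hG'T
  have hspan_eq : Submodule.span ℝ ((D.R.image D.coroot : Finset V') : Set V') = P := by
    rw [hP, Finset.coe_image]
  -- the radical of the sum form intersects the coroot span trivially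
  have hK : ∀ x' ∈ P, (∀ α ∈ D.R, D.pair α x' = 0) → x' = 0 := by
    intro x' hx' hpz
    have hx'span : x' ∈ Submodule.span ℝ ((D.R.image D.coroot : Finset V') : Set V') := by
      rw [hspan_eq]; exact hx'
    -- C' x' c = 0 for every coroot c
    have hCc : ∀ α ∈ D.R, C' x' (D.coroot α) = 0 := by
      intro α hα
      have hcspan : D.coroot α ∈ Submodule.span ℝ ((D.R.image D.coroot : Finset V') : Set V') :=
        Submodule.subset_span (by exact_mod_cast Finset.mem_image.2 ⟨α, hα, rfl⟩)
      have hgen : D.reflV' α hα ∈ G' := Subgroup.mem_map.2 ⟨_, D.gen_mem_weyl hα, rfl⟩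
      have hinvx := hinv' _ hgen x' hx'span (D.coroot α) hcspan
      have hfix : D.reflV' α hα x' = x' := by
        rw [D.reflV'_apply hα, hpz α hα, zero_smul, sub_zero]
      rw [hfix, D.reflV'_self hα] at hinvx
      have hneg : C' x' (-D.coroot α) = -C' x' (D.coroot α) := by
        rw [hsymm' x' (-D.coroot α), ← neg_one_smul ℝ (D.coroot α), hsmul', hsymm']
        ring
      rw [hneg] at hinvx
      linarith
    -- hence C' x' y = 0 for all y in the span
    have hCy : ∀ y ∈ Submodule.span ℝ ((D.R.image D.coroot : Finset V') : Set V'),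
        C' x' y = 0 := by
      intro y hy
      induction hy using Submodule.span_induction with
      | mem z hz =>
          obtain ⟨α, hα, rfl⟩ := Finset.mem_image.1 (by exact_mod_cast hz)
          exact hCc α hα
      | zero =>
          have : C' x' ((0 : ℝ) • (0 : V')) = 0 * C' x' (0 : V') := by
            rw [hsymm', hsmul', hsymm']
          simpa using this
      | add a b _ _ ha hb =>
          rw [hsymm', hadd', hsymm' a x', hsymm' b x', ha, hb, add_zero]
      | smul r a _ ha =>
          rw [hsymm', hsmul', hsymm', ha, mul_zero]
    by_contra hne
    exact absurd (hCy x' hx'span) (hpos' x' hx'span hne).ne'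
  -- assemble the bilinear form
  set q : V' →ₗ[ℝ] V' ⧸ P := P.mkQ with hq
  set T2 : V' →ₗ[ℝ] V' →ₗ[ℝ] ℝ := LinearMap.mk₂ ℝ (fun x y => Cq (q x) (q y))
    (fun x₁ x₂ y => by
      show Cq (q (x₁ + x₂)) (q y) = Cq (q x₁) (q y) + Cq (q x₂) (q y)
      rw [map_add]; exact hqadd _ _ _)
    (fun a x y => by
      show Cq (q (a • x)) (q y) = a * Cq (q x) (q y)
      rw [map_smul]; exact hqsmul _ _ _)
    (fun x y₁ y₂ => by
      show Cq (q x) (q (y₁ + y₂)) = Cq (q x) (q y₁) + Cq (q x) (q y₂)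
      rw [map_add, hqsymm, hqadd, hqsymm (q y₁) (q x), hqsymm (q y₂) (q x)])
    (fun a x y => by
      show Cq (q x) (q (a • y)) = a * Cq (q x) (q y)
      rw [map_smul, hqsymm, hqsmul, hqsymm (q y) (q x)]) with hT2
  set T1 : V' →ₗ[ℝ] V' →ₗ[ℝ] ℝ :=
    ∑ α ∈ D.R, (LinearMap.mul ℝ ℝ).compl₁₂ (D.pair α) (D.pair α) with hT1
  have hT1apply : ∀ x y : V', T1 x y = ∑ α ∈ D.R, D.pair α x * D.pair α y := by
    intro x y
    rw [hT1, LinearMap.coe_sum, Finset.sum_apply, LinearMap.coe_sum, Finset.sum_apply]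
    exact Finset.sum_congr rfl fun α _ => rfl
  have hT2apply : ∀ x y : V', T2 x y = Cq (q x) (q y) := fun x y => rfl
  refine ⟨⟨T1 + T2, ?_, ?_, ?_⟩⟩
  · -- symmetry
    intro x y
    rw [LinearMap.add_apply, LinearMap.add_apply, LinearMap.add_apply, LinearMap.add_apply,
      hT1apply, hT1apply, hT2apply, hT2apply, hqsymm]
    congr 1
    exact Finset.sum_congr rfl fun α _ => mul_comm _ _
  · -- positive definiteness
    intro x hx
    have hT1nonneg : 0 ≤ T1 x x := by
      rw [hT1apply]
      exact Finset.sum_nonneg fun α _ => mul_self_nonneg _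
    have hT2nonneg : 0 ≤ T2 x x := by rw [hT2apply]; exact hqnonneg _
    rw [LinearMap.add_apply, LinearMap.add_apply]
    rcases lt_or_eq_of_le (add_nonneg hT1nonneg hT2nonneg) with h | h
    · exact h
    · exfalso
      have h1 : T1 x x = 0 := by linarith
      have h2 : T2 x x = 0 := by linarith
      have hxP : x ∈ P := by
        have hq0 : Cq (q x) (q x) = 0 := by rw [← hT2apply]; exact h2
        by_contra hxP
        have hqx : q x ≠ 0 := by
          intro hqx0
          apply hxP
          rw [hq, Submodule.mkQ_apply] at hqx0
          exact (Submodule.Quotient.mk_eq_zero P).1 hqx0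
        exact absurd hq0 (hqpos _ hqx).ne'
      have hpz : ∀ α ∈ D.R, D.pair α x = 0 := by
        intro α hα
        have hsq := (Finset.sum_eq_zero_iff_of_nonneg
          (fun β (_ : β ∈ D.R) => mul_self_nonneg (D.pair β x))).1 (by rw [← hT1apply]; exact h1)
        exact mul_self_eq_zero.1 (hsq α hα)
      exact hx (hK x hxP hpz)
  · -- invariance
    intro g hg x y
    obtain ⟨hpair, hr, hr', hc, hc', hd⟩ := D.weyl_props hg
    have h2 : T2 (g.2 x) (g.2 y) = T2 x y := by
      rw [hT2apply, hT2apply]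
      have hqx : q (g.2 x) = q x := by
        rw [hq]
        rw [Submodule.mkQ_apply, Submodule.mkQ_apply, Submodule.Quotient.eq]
        exact hd x
      have hqy : q (g.2 y) = q y := by
        rw [hq, Submodule.mkQ_apply, Submodule.mkQ_apply, Submodule.Quotient.eq]
        exact hd y
      rw [hqx, hqy]
    have h1 : T1 (g.2 x) (g.2 y) = T1 x y := by
      rw [hT1apply, hT1apply]
      refine Finset.sum_nbij' (fun a => g.1.symm a) (fun a => g.1 a) ?_ ?_ ?_ ?_ ?_
      · intro a ha
        exact hr' a ha
      · intro a ha
        exact hr a ha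
      · intro a _
        exact g.1.apply_symm_apply a
      · intro a _
        exact g.1.symm_apply_apply a
      · intro a ha
        have := hpair (g.1.symm a) x
        rw [g.1.apply_symm_apply] at this
        have h2' := hpair (g.1.symm a) y
        rw [g.1.apply_symm_apply] at h2'
        rw [this, h2']
    rw [LinearMap.add_apply, LinearMap.add_apply, LinearMap.add_apply, LinearMap.add_apply,
      h1, h2]

end RootSystemData
theorem highest_root_coroot_short_dominant_unique {V V' : Type} [AddCommGroup V] [Module ℝ V] [FiniteDimensional ℝ V]
    [AddCommGroup V'] [Module ℝ V'] [FiniteDimensional ℝ V']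
    (D : RootSystemData V V')
    (hirr : ∀ α ∈ D.R, ∀ β ∈ D.R, D.SameComponent α β)
    (γ : V) (hγ : γ ∈ D.R)
    (hhigh : ∀ α ∈ D.R, γ - α ∈ AddSubmonoid.closure (D.Δ : Set V)) :
    D.IsShortCoroot γ ∧ D.Dominant (D.coroot γ) ∧
      ∀ β ∈ D.R, D.IsShortCoroot β → D.Dominant (D.coroot β) →
        D.coroot β = D.coroot γ := by
  obtain ⟨Binst⟩ := D.exists_WInvInner
  refine ⟨D.short_gamma hγ hhigh, D.dominant_coroot_gamma hγ hhigh, ?_⟩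
  intro β hβ hshort hdomβ
  by_cases hβγ : β = γ
  · rw [hβγ]
  exfalso
  -- equal lengths
  have hle1 := hshort.2 Binst γ hγ (hirr γ hγ β hβ)
  have hle2 := D.form_coroot_gamma_le hγ hhigh Binst hβ
  have hlen : Binst.form (D.coroot β) (D.coroot β) = Binst.form (D.coroot γ) (D.coroot γ) :=
    le_antisymm hle1 hle2
  have hℓγ : 0 < Binst.form (D.coroot γ) (D.coroot γ) := D.form_pos Binst hγ
  have hℓβ : 0 < Binst.form (D.coroot β) (D.coroot β) := D.form_pos Binst hβ
  -- the coroot of β is dominant on the simple roots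
  have hdom' : ∀ δ ∈ D.Δ, 0 ≤ D.pair δ (D.coroot β) := by
    intro δ hδ
    exact hdomβ δ (Finset.mem_filter.2 ⟨D.base_subset hδ,
      AddSubmonoid.subset_closure (Finset.mem_coe.2 hδ)⟩)
  have hq : 0 < D.pair γ (D.coroot β) := D.pair_gamma_coroot_pos hγ hhigh hβ hdom'
  -- F2 identity
  have hF2 : D.pair β (D.coroot γ) * Binst.form (D.coroot β) (D.coroot β)
      = D.pair γ (D.coroot β) * Binst.form (D.coroot γ) (D.coroot γ) := by
    have e1 := D.form_coroot Binst hβ (D.coroot γ)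
    have e2 := D.form_coroot Binst hγ (D.coroot β)
    have e3 := Binst.symm (D.coroot γ) (D.coroot β)
    linarith
  -- pair β γ∨ = pair γ β∨
  have heq : D.pair β (D.coroot γ) = D.pair γ (D.coroot β) := by
    rw [hlen] at hF2
    exact mul_right_cancel₀ hℓγ.ne' hF2
  -- so pair γ β∨ = 1
  have hq1 : D.pair γ (D.coroot β) = 1 := by
    obtain ⟨m, hm⟩ := D.crystallographic γ hγ β hβ
    have hle := D.pair_le_one hγ hhigh hβ hβγ
    rw [← heq] at hm
    have h0 : (0 : ℝ) < m := by rw [← hm, heq]; exact hq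
    have h1 : (m : ℝ) ≤ 1 := hm ▸ hle
    have hm0 : 0 < m := by exact_mod_cast h0
    have hm1 : m ≤ 1 := by exact_mod_cast h1
    have : m = 1 := by omega
    rw [← heq, hm, this]
    norm_num
  -- γ - β is a positive root
  have hroot := D.reflect_root_mem β hβ γ hγ
  rw [hq1, one_smul] at hroot
  have hmemRpos : γ - β ∈ D.Rpos := Finset.mem_filter.2 ⟨hroot, hhigh β hβ⟩
  have hd := hdomβ _ hmemRpos
  rw [map_sub, LinearMap.sub_apply, hq1, D.pair_self_eq_two β hβ] at hd
  linarith

end
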